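/- arXiv:2510.20311 — 3 statements merged into one kernel-verified Lean document; each statement's English description precedes it below -/
import Mathlib

section
/- For a finite-dimensional Hilbert space, a quantum state ensemble {(η_i, ρ_i)}_{i=1}^n with all η_i > 0, and an index x, the maximum confidence C_x = max over measurements {M_?} ∪ {M_i} with Tr(ρ₀ M_x) > 0 of η_x Tr(ρ_x M_x)/Tr(ρ₀ M_x) equals the minimum over real q of those q such that q ρ₀ − η_x ρ_x is positive semidefinite, where ρ₀ = Σ_i η_i ρ_i. -/
open Matrix BigOperators
open scoped ComplexOrder

set_option linter.unusedSectionVars false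
set_option maxHeartbeats 1000000

variable {m : Type*} [Fintype m] [DecidableEq m]

private lemma trace_psd_nonneg {M : Matrix m m ℂ} (hM : M.PosSemidef) : 0 ≤ M.trace := by
  apply Finset.sum_nonneg
  intro i _
  have h := hM.dotProduct_mulVec_nonneg (Pi.single i 1)
  simpa [dotProduct, mulVec, Pi.single_apply] using h

open scoped MatrixOrder in
private lemma trace_mul_psd_nonneg {P Q : Matrix m m ℂ}
    (hP : P.PosSemidef) (hQ : Q.PosSemidef) : 0 ≤ (P * Q).trace := by
  have h1 : P * Q = P * (CFC.sqrt Q * CFC.sqrt Q) := by rw [CFC.sqrt_mul_sqrt_self Q hQ.nonneg]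
  have h2 : (P * (CFC.sqrt Q * CFC.sqrt Q)).trace = (CFC.sqrt Q * P * CFC.sqrt Q).trace := by
    rw [← mul_assoc, trace_mul_comm, ← mul_assoc]
  rw [h1, h2]
  have h3 := hP.mul_mul_conjTranspose_same (CFC.sqrt Q)
  rw [(CFC.sqrt_nonneg Q).posSemidef.1] at h3
  exact trace_psd_nonneg h3

private lemma trace_mul_vecMulVec (X : Matrix m m ℂ) (u : m → ℂ) :
    (X * vecMulVec u (star u)).trace = star u ⬝ᵥ (X *ᵥ u) := by
  simp only [Matrix.trace, Matrix.diag, mul_apply, vecMulVec_apply, dotProduct, mulVec,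
    Pi.star_apply, Finset.mul_sum, Finset.sum_mul]
  refine Finset.sum_congr rfl fun i _ => Finset.sum_congr rfl fun j _ => by ring

private lemma psd_smul {M : Matrix m m ℂ} (hM : M.PosSemidef) {c : ℝ} (hc : 0 ≤ c) :
    ((c : ℂ) • M).PosSemidef := by
  refine Matrix.PosSemidef.of_dotProduct_mulVec_nonneg ?_ ?_
  · rw [IsHermitian, conjTranspose_smul, hM.1]
    congr 1
    rw [Complex.star_def, Complex.conj_ofReal]
  · intro y
    rw [smul_mulVec, dotProduct_smul, smul_eq_mul]
    exact mul_nonneg (Complex.zero_le_real.mpr hc) (hM.dotProduct_mulVec_nonneg y)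

private lemma psd_sum {ι : Type*} (s : Finset ι) (f : ι → Matrix m m ℂ)
    (h : ∀ i ∈ s, (f i).PosSemidef) : (∑ i ∈ s, f i).PosSemidef := by
  classical
  induction s using Finset.induction_on with
  | empty => exact ⟨by simp [IsHermitian], fun y => by simp⟩
  | insert _ _ hni ih =>
      rw [Finset.sum_insert hni]
      exact (h _ (Finset.mem_insert_self _ _)).add
        (ih fun i hi => h i (Finset.mem_insert_of_mem hi))

private lemma vecMulVec_posSemidef (u : m → ℂ) : (vecMulVec u (star u)).PosSemidef := by
  refine Matrix.PosSemidef.of_dotProduct_mulVec_nonneg ?_ ?_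
  · ext i j
    simp [conjTranspose_apply, vecMulVec_apply, mul_comm]
  · intro y
    have h : star y ⬝ᵥ (vecMulVec u (star u) *ᵥ y)
        = star (star u ⬝ᵥ y) * (star u ⬝ᵥ y) := by
      simp only [dotProduct, mulVec, vecMulVec_apply, Pi.star_apply, star_sum, star_mul',
        star_star, Finset.mul_sum, Finset.sum_mul]
      rw [Finset.sum_comm]
      refine Finset.sum_congr rfl fun i _ => Finset.sum_congr rfl fun j _ => by ring
    rw [h]
    exact star_mul_self_nonneg _

private lemma vecMulVec_mul_self (u : m → ℂ) :
    vecMulVec u (star u) * vecMulVec u (star u)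
      = (star u ⬝ᵥ u) • vecMulVec u (star u) := by
  ext i j
  simp only [mul_apply, vecMulVec_apply, Matrix.smul_apply, dotProduct, Pi.star_apply,
    smul_eq_mul, Finset.sum_mul, Finset.mul_sum]
  refine Finset.sum_congr rfl fun k _ => by ring

private lemma quad_conj (X N : Matrix m m ℂ) (w : m → ℂ) :
    star (N *ᵥ w) ⬝ᵥ (X *ᵥ (N *ᵥ w)) = star w ⬝ᵥ ((Nᴴ * X * N) *ᵥ w) := by
  rw [star_mulVec]
  simp only [dotProduct_mulVec, vecMul_vecMul]

private lemma key [Nonempty m]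

    {R A : Matrix m m ℂ} (hR : R.PosSemidef) (hA : A.PosSemidef)
    (hRA : (R - A).PosSemidef) (hAne : A ≠ 0) :
    ∃ C : ℝ, 0 < C ∧ ((C : ℂ) • R - A).PosSemidef ∧
      (∀ q : ℝ, ((q : ℂ) • R - A).PosSemidef → C ≤ q) ∧
      ∃ u : m → ℂ, star u ⬝ᵥ (R *ᵥ u) = 1 ∧ star u ⬝ᵥ (A *ᵥ u) = (C : ℂ) := by
  classical
  have hH := hR.1
  set U : Matrix m m ℂ := (Matrix.IsHermitian.eigenvectorUnitary hH : Matrix m m ℂ) with hUdef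
  have hU1 : U * Uᴴ = 1 := by
    rw [← star_eq_conjTranspose]
    exact (Matrix.mem_unitaryGroup_iff).mp (Matrix.IsHermitian.eigenvectorUnitary hH).2
  have hU2 : Uᴴ * U = 1 := by
    rw [← star_eq_conjTranspose]
    exact (Matrix.mem_unitaryGroup_iff').mp (Matrix.IsHermitian.eigenvectorUnitary hH).2
  set dv : m → ℝ := hH.eigenvalues with hdv
  have hdv0 : ∀ i, 0 ≤ dv i := hR.eigenvalues_nonneg
  set D : Matrix m m ℂ := diagonal (fun i => (dv i : ℂ)) with hD
  have spec : R = U * D * Uᴴ := by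
    have h := hH.spectral_theorem
    rw [Unitary.conjStarAlgAut_apply, star_eq_conjTranspose] at h
    convert h using 3
    all_goals rfl
  have hRU : Uᴴ * R * U = D := by
    rw [spec]
    calc Uᴴ * (U * D * Uᴴ) * U = (Uᴴ * U) * D * (Uᴴ * U) := by simp only [mul_assoc]
    _ = D := by rw [hU2, one_mul, mul_one]
  set B : Matrix m m ℂ := Uᴴ * A * U with hB
  have hBpsd : B.PosSemidef := hA.conjTranspose_mul_mul_same U
  have hAU : U * B * Uᴴ = A := by
    rw [hB]
    calc U * (Uᴴ * A * U) * Uᴴ = (U * Uᴴ) * A * (U * Uᴴ) := by simp only [mul_assoc]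
    _ = A := by rw [hU1, one_mul, mul_one]
  have hDB : (D - B).PosSemidef := by
    have h := hRA.conjTranspose_mul_mul_same U
    have e : Uᴴ * (R - A) * U = D - B := by rw [mul_sub, sub_mul, hRU, hB]
    rwa [e] at h
  -- vanishing of B outside the support of D
  have hBcol : ∀ i j, dv j = 0 → B i j = 0 := by
    intro i j hj
    have hBjj : B j j = 0 := by
      have h1 : 0 ≤ B j j := by
        have h := hBpsd.dotProduct_mulVec_nonneg (Pi.single j 1)
        simpa [dotProduct, mulVec, Pi.single_apply] using h
      have h2 : 0 ≤ -(B j j) := by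
        have h := hDB.dotProduct_mulVec_nonneg (Pi.single j 1)
        simpa [dotProduct, mulVec, Pi.single_apply, hD, diagonal_apply, hj] using h
      exact le_antisymm (neg_nonneg.mp h2) h1
    have hzero : B *ᵥ Pi.single j 1 = 0 := by
      rw [← hBpsd.dotProduct_mulVec_zero_iff]
      simpa [dotProduct, mulVec, Pi.single_apply] using hBjj
    have := congr_fun hzero i
    simpa [mulVec, Pi.single_apply] using this
  have hBrow : ∀ i j, dv i = 0 → B i j = 0 := by
    intro i j hi
    have : B i j = star (B j i) := by
      conv_lhs => rw [← hBpsd.1]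
      simp [conjTranspose_apply]
    rw [this, hBcol j i hi, star_zero]
  -- diagonal auxiliary matrices
  set ev : m → ℝ := fun i => Real.sqrt (dv i) with hev
  set fv : m → ℝ := fun i => if dv i = 0 then 0 else (Real.sqrt (dv i))⁻¹ with hfv
  set E : Matrix m m ℂ := diagonal (fun i => (ev i : ℂ)) with hE
  set F : Matrix m m ℂ := diagonal (fun i => (fv i : ℂ)) with hF
  set Pr : Matrix m m ℂ := diagonal (fun i => if dv i = 0 then (0:ℂ) else 1) with hPrdef
  have hEH : Eᴴ = E := by
    rw [hE, diagonal_conjTranspose]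
    refine congrArg Matrix.diagonal (funext fun i => ?_)
    simp [Pi.star_apply, Complex.star_def, Complex.conj_ofReal]
  have hFH : Fᴴ = F := by
    rw [hF, diagonal_conjTranspose]
    refine congrArg Matrix.diagonal (funext fun i => ?_)
    simp [Pi.star_apply, Complex.star_def, Complex.conj_ofReal]
  have hPrH : Prᴴ = Pr := by
    rw [hPrdef, diagonal_conjTranspose]
    refine congrArg Matrix.diagonal (funext fun i => ?_)
    by_cases hi : dv i = 0 <;> simp [Pi.star_apply, hi]
  set T : Matrix m m ℂ := F * B * F with hT
  have hTpsd : T.PosSemidef := by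
    have h := hBpsd.mul_mul_conjTranspose_same F
    rwa [hFH] at h
  have hTH : T.IsHermitian := hTpsd.1
  have hefc : ∀ i, dv i ≠ 0 → (ev i : ℂ) * (fv i : ℂ) = 1 := by
    intro i hi
    have hs : Real.sqrt (dv i) ≠ 0 :=
      ne_of_gt (Real.sqrt_pos.mpr (lt_of_le_of_ne (hdv0 i) (Ne.symm hi)))
    rw [hev, hfv]
    simp only [hi, if_false]
    rw [← Complex.ofReal_mul, mul_inv_cancel₀ hs, Complex.ofReal_one]
  have hETE : E * T * E = B := by
    rw [hT]
    ext i j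
    rw [hE, hF, mul_diagonal, diagonal_mul, mul_diagonal, diagonal_mul]
    by_cases hi : dv i = 0
    · simp [hBrow i j hi, hfv, hi]
    · by_cases hj : dv j = 0
      · simp [hBcol i j hj, hfv, hj]
      · calc (ev i : ℂ) * ((fv i : ℂ) * B i j * (fv j : ℂ)) * (ev j : ℂ)
            = ((ev i : ℂ) * (fv i : ℂ)) * ((ev j : ℂ) * (fv j : ℂ)) * B i j := by ring
          _ = B i j := by rw [hefc i hi, hefc j hj, one_mul, one_mul]
  have hFDF : F * D * F = Pr := by
    rw [hF, hD, hPrdef, diagonal_mul_diagonal, diagonal_mul_diagonal]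
    refine congrArg Matrix.diagonal (funext fun i => ?_)
    by_cases hi : dv i = 0
    · simp [hfv, hi]
    · have hs : Real.sqrt (dv i) ≠ 0 :=
        ne_of_gt (Real.sqrt_pos.mpr (lt_of_le_of_ne (hdv0 i) (Ne.symm hi)))
      have hr : fv i * dv i * fv i = 1 := by
        rw [hfv]
        simp only [hi, if_false]
        rw [← Real.mul_self_sqrt (hdv0 i)]
        field_simp
        rw [Real.sqrt_sq (Real.sqrt_nonneg (dv i))]
      simp only [hi, if_false]
      rw [← Complex.ofReal_mul, ← Complex.ofReal_mul, hr, Complex.ofReal_one]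
  have hEPrE : E * Pr * E = D := by
    rw [hE, hPrdef, hD, diagonal_mul_diagonal, diagonal_mul_diagonal]
    refine congrArg Matrix.diagonal (funext fun i => ?_)
    by_cases hi : dv i = 0
    · simp [hi]
    · have hr : Real.sqrt (dv i) * Real.sqrt (dv i) = dv i := Real.mul_self_sqrt (hdv0 i)
      simp only [hi, if_false, mul_one]
      rw [← Complex.ofReal_mul, hr]
  have hPrPr : Pr * Pr = Pr := by
    rw [hPrdef, diagonal_mul_diagonal]
    refine congrArg Matrix.diagonal (funext fun i => ?_)
    by_cases hi : dv i = 0 <;> simp [hi]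
  have hPrT : Pr * T = T := by
    ext i j
    rw [hPrdef, diagonal_mul]
    by_cases hi : dv i = 0
    · have : T i j = 0 := by
        rw [hT, hF, mul_diagonal, diagonal_mul]
        simp [hfv, hi]
      simp [hi, this]
    · simp [hi]
  have hTPr : T * Pr = T := by
    ext i j
    rw [hPrdef, mul_diagonal]
    by_cases hj : dv j = 0
    · have : T i j = 0 := by
        rw [hT, hF, mul_diagonal, diagonal_mul]
        simp [hfv, hj]
      simp [hj, this]
    · simp [hj]
  -- the maximal eigenvalue of T
  obtain ⟨i₀, -, hmax⟩ := Finset.exists_max_image Finset.univ hTH.eigenvalues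
    ⟨Classical.arbitrary m, Finset.mem_univ _⟩
  set C : ℝ := hTH.eigenvalues i₀ with hC
  have hCmax : ∀ i, hTH.eigenvalues i ≤ C := fun i => hmax i (Finset.mem_univ _)
  -- C • 1 - T is PSD
  have hCT : ((C : ℂ) • 1 - T).PosSemidef := by
    set V : Matrix m m ℂ := (Matrix.IsHermitian.eigenvectorUnitary hTH : Matrix m m ℂ) with hVdef
    have hV1 : V * Vᴴ = 1 := by
      rw [← star_eq_conjTranspose]
      exact (Matrix.mem_unitaryGroup_iff).mp (Matrix.IsHermitian.eigenvectorUnitary hTH).2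
    have hsp : T = V * diagonal (RCLike.ofReal ∘ hTH.eigenvalues) * Vᴴ := by
      have h := hTH.spectral_theorem
      rw [Unitary.conjStarAlgAut_apply, star_eq_conjTranspose] at h
      exact h
    have hdiagpsd : (diagonal (fun i => ((C - hTH.eigenvalues i : ℝ) : ℂ))).PosSemidef := by
      rw [posSemidef_diagonal_iff]
      intro i
      rw [Complex.zero_le_real]
      linarith [hCmax i]
    have h1 : (C : ℂ) • (1 : Matrix m m ℂ) - diagonal (RCLike.ofReal ∘ hTH.eigenvalues)
        = diagonal (fun i => ((C - hTH.eigenvalues i : ℝ) : ℂ)) := by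
      ext i j
      by_cases hij : i = j
      · subst hij
        simp only [Matrix.sub_apply, Matrix.smul_apply, diagonal_apply_eq, Function.comp_apply,
          smul_eq_mul, Matrix.one_apply_eq, mul_one]
        show (C : ℂ) - ((hTH.eigenvalues i : ℝ) : ℂ) = ((C - hTH.eigenvalues i : ℝ) : ℂ)
        push_cast
        ring
      · simp [diagonal_apply_ne _ hij, Matrix.one_apply_ne hij, Matrix.smul_apply]
    have heq : (C : ℂ) • 1 - T
        = V * ((C : ℂ) • 1 - diagonal (RCLike.ofReal ∘ hTH.eigenvalues)) * Vᴴ := by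
      rw [mul_sub, sub_mul, ← hsp, mul_smul_comm, smul_mul_assoc, mul_one, hV1]
    rw [heq, h1]
    exact hdiagpsd.mul_mul_conjTranspose_same V
  have hCPr : ((C : ℂ) • Pr - T).PosSemidef := by
    have h := hCT.mul_mul_conjTranspose_same Pr
    rw [hPrH] at h
    have heq : Pr * ((C : ℂ) • 1 - T) * Pr = (C : ℂ) • Pr - T := by
      rw [mul_sub, sub_mul, mul_smul_comm, mul_one, smul_mul_assoc, hPrPr, hPrT, hTPr]
    rwa [heq] at h
  have hCDB : ((C : ℂ) • D - B).PosSemidef := by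
    have h := hCPr.mul_mul_conjTranspose_same E
    rw [hEH] at h
    have heq : E * ((C : ℂ) • Pr - T) * E = (C : ℂ) • D - B := by
      rw [mul_sub, sub_mul, mul_smul_comm, smul_mul_assoc, hEPrE, hETE]
    rwa [heq] at h
  have hCRA : ((C : ℂ) • R - A).PosSemidef := by
    have h := hCDB.mul_mul_conjTranspose_same U
    have heq : U * ((C : ℂ) • D - B) * Uᴴ = (C : ℂ) • R - A := by
      rw [mul_sub, sub_mul, mul_smul_comm, smul_mul_assoc, hAU, ← spec]
    rwa [heq] at h
  -- the eigenvector for C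
  have hw := hTH.mulVec_eigenvectorBasis i₀
  set w : m → ℂ := ⇑(hTH.eigenvectorBasis i₀) with hwdef
  have hwn : star w ⬝ᵥ w = 1 := by
    have h1 := orthonormal_iff_ite.mp hTH.eigenvectorBasis.orthonormal i₀ i₀
    simp only [if_true, eq_self_iff_true] at h1
    rw [← h1, PiLp.inner_apply]
    simp only [dotProduct, RCLike.inner_apply, Pi.star_apply, RCLike.star_def]
    exact Finset.sum_congr rfl fun x _ => mul_comm _ _
  have hCpos : 0 < C := by
    rcases lt_or_ge 0 C with h | h
    · exact h
    exfalso
    have hz : ∀ i, hTH.eigenvalues i = 0 := fun i =>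
      le_antisymm (le_trans (hCmax i) h) (hTpsd.eigenvalues_nonneg i)
    have hT0 : T = 0 := by
      have hsp := hTH.spectral_theorem
      rw [hsp]
      have : diagonal (RCLike.ofReal ∘ hTH.eigenvalues) = (0 : Matrix m m ℂ) := by
        rw [← diagonal_zero]
        refine congrArg Matrix.diagonal (funext fun i => ?_)
        simp [Function.comp, hz i]
      rw [this, map_zero]
    have hB0 : B = 0 := by rw [← hETE, hT0, mul_zero, zero_mul]
    have hA0 : A = 0 := by rw [← hAU, hB0, mul_zero, zero_mul]
    exact hAne hA0
  have hPrw : Pr *ᵥ w = w := by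
    have h1 : Pr *ᵥ (T *ᵥ w) = T *ᵥ w := by rw [mulVec_mulVec, hPrT]
    rw [hw, mulVec_smul] at h1
    exact smul_right_injective _ (ne_of_gt hCpos) h1
  refine ⟨C, hCpos, hCRA, ?_, ?_⟩
  · intro q hq
    have h1 := hq.conjTranspose_mul_mul_same U
    have e1 : Uᴴ * ((q : ℂ) • R - A) * U = (q : ℂ) • D - B := by
      rw [mul_sub, sub_mul, mul_smul_comm, smul_mul_assoc, hRU, hB]
    rw [e1] at h1
    have h2 := h1.conjTranspose_mul_mul_same F
    rw [hFH] at h2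
    have e2 : F * ((q : ℂ) • D - B) * F = (q : ℂ) • Pr - T := by
      rw [mul_sub, sub_mul, mul_smul_comm, smul_mul_assoc, hFDF, hT]
    rw [e2] at h2
    have h3 := h2.dotProduct_mulVec_nonneg w
    have e3 : ((q : ℂ) • Pr - T) *ᵥ w = (q : ℂ) • w - C • w := by
      rw [sub_mulVec, smul_mulVec, hPrw, hw]
    rw [e3, dotProduct_sub, dotProduct_smul, dotProduct_smul, hwn] at h3
    have h4 : (0:ℂ) ≤ (q : ℂ) - (C : ℂ) := by
      convert h3 using 1
      simp [smul_eq_mul, Complex.real_smul]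
    have := sub_nonneg.mp h4
    exact_mod_cast this
  · refine ⟨(U * F) *ᵥ w, ?_, ?_⟩
    · rw [quad_conj]
      have e5 : (U * F)ᴴ * R * (U * F) = Pr := by
        rw [conjTranspose_mul, hFH, ← hFDF, ← hRU]
        simp only [mul_assoc]
      rw [e5, hPrw, hwn]
    · rw [quad_conj]
      have e6 : (U * F)ᴴ * A * (U * F) = T := by
        rw [conjTranspose_mul, hFH, hT, hB]
        simp only [mul_assoc]
      rw [e6, hw, dotProduct_smul, hwn]
      simp [smul_eq_mul]
      exact hC.symm

/-- the maximum confidence (max over measurements with Tr(ρ₀ Mₓ) > 0 of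
η_x Tr(ρ_x Mₓ)/Tr(ρ₀ Mₓ)) equals min{q ∈ ℝ : q ρ₀ − η_x ρ_x ⪰ 0}. -/
theorem stmt_0 {d n : ℕ} (hd : 0 < d) (hn : 0 < n)
    (η : Fin n → ℝ) (ρ : Fin n → Matrix (Fin d) (Fin d) ℂ)
    (hη : ∀ i, 0 < η i) (hηsum : ∑ i, η i = 1)
    (hρ : ∀ i, (ρ i).PosSemidef) (hρtr : ∀ i, (ρ i).trace = 1)
    (x : Fin n)
    (ρ₀ : Matrix (Fin d) (Fin d) ℂ) (hρ₀ : ρ₀ = ∑ i, (η i : ℂ) • ρ i) :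
    ∃ C : ℝ,
      IsGreatest { r : ℝ | ∃ M : Option (Fin n) → Matrix (Fin d) (Fin d) ℂ,
          (∀ j, (M j).PosSemidef) ∧ ∑ j, M j = 1 ∧
          0 < (ρ₀ * M (some x)).trace.re ∧
          r = η x * (ρ x * M (some x)).trace.re / (ρ₀ * M (some x)).trace.re } C ∧
      IsLeast { q : ℝ | ((q : ℂ) • ρ₀ - (η x : ℂ) • ρ x).PosSemidef } C := by
  classical
  have hdne : Nonempty (Fin d) := ⟨⟨0, hd⟩⟩
  set A : Matrix (Fin d) (Fin d) ℂ := (η x : ℂ) • ρ x with hAdef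
  have hApsd : A.PosSemidef := psd_smul (hρ x) (hη x).le
  have hρ₀psd : ρ₀.PosSemidef := by
    rw [hρ₀]; exact psd_sum _ _ fun i _ => psd_smul (hρ i) (hη i).le
  have hsub : (ρ₀ - A).PosSemidef := by
    have h2 := Finset.add_sum_erase Finset.univ (fun i => (η i : ℂ) • ρ i) (Finset.mem_univ x)
    have : ρ₀ - A = ∑ i ∈ Finset.univ.erase x, (η i : ℂ) • ρ i := by
      rw [hρ₀, ← h2, hAdef, add_sub_cancel_left]
    rw [this]
    exact psd_sum _ _ fun i _ => psd_smul (hρ i) (hη i).le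
  have hAne : A ≠ 0 := by
    intro h
    have htr : A.trace = (η x : ℂ) := by
      rw [hAdef, trace_smul, hρtr x, smul_eq_mul, mul_one]
    rw [h, trace_zero] at htr
    have : (η x : ℝ) = 0 := by exact_mod_cast htr.symm
    exact (hη x).ne' this
  obtain ⟨C, hCpos, hCRA, hmin, u, hu1, huA⟩ := key hρ₀psd hApsd hsub hAne
  have hune : u ≠ 0 := by
    intro h; rw [h] at hu1; simp at hu1
  set nrm : ℂ := star u ⬝ᵥ u with hnrmdef
  have hnrmpos : 0 < nrm := dotProduct_star_self_pos_iff.mpr hune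
  have hr : 0 < nrm.re := (Complex.lt_def.mp hnrmpos).1
  have hr0 : nrm.re ≠ 0 := ne_of_gt hr
  have hnrmre : nrm = ((nrm.re : ℝ) : ℂ) :=
    Complex.ext rfl (Complex.lt_def.mp hnrmpos).2.symm
  set c : ℂ := ((nrm.re⁻¹ : ℝ) : ℂ) with hcdef
  set K := vecMulVec u (star u) with hKdef
  set P := c • K with hPdef
  have hKpsd := vecMulVec_posSemidef u
  have hPpsd : P.PosSemidef := psd_smul hKpsd (by positivity)
  have hPH : Pᴴ = P := hPpsd.1
  have hPP : P * P = P := by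
    rw [hPdef, smul_mul_assoc, mul_smul_comm, smul_smul, hKdef, vecMulVec_mul_self,
      ← hnrmdef, hnrmre]
    rw [smul_smul]
    congr 1
    rw [hcdef, ← Complex.ofReal_mul, ← Complex.ofReal_mul]
    congr 1
    field_simp
  have h1P : (1 - P).PosSemidef := by
    have hidem : (1 - P) * (1 - P) = 1 - P := by
      rw [sub_mul, one_mul, mul_sub, mul_one, hPP]
      simp
    have hconj : (1 - P)ᴴ = 1 - P := by
      rw [conjTranspose_sub, conjTranspose_one, hPH]
    have : 1 - P = (1 - P) * (1 - P)ᴴ := by rw [hconj, hidem]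
    rw [this]
    exact posSemidef_self_mul_conjTranspose _
  set Mfun : Option (Fin n) → Matrix (Fin d) (Fin d) ℂ :=
    fun j => Option.elim j (1 - P) (fun i => if i = x then P else 0) with hMfun
  have hMx : Mfun (some x) = P := by simp [hMfun]
  have hMpsd : ∀ j, (Mfun j).PosSemidef := by
    intro j
    cases j with
    | none => exact h1P
    | some i =>
      by_cases hix : i = x
      · simpa [hMfun, hix] using hPpsd
      · simpa [hMfun, hix] using ⟨by simp [IsHermitian], fun y => by simp⟩
  have hMsum : ∑ j, Mfun j = 1 := by
    rw [Fintype.sum_option]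
    simp [hMfun, Finset.sum_ite_eq']
  have htr0 : (ρ₀ * Mfun (some x)).trace = c := by
    rw [hMx, hPdef, Matrix.mul_smul, trace_smul, hKdef, trace_mul_vecMulVec, hu1, smul_eq_mul, mul_one]
  have htr0re : (ρ₀ * Mfun (some x)).trace.re = nrm.re⁻¹ := by
    rw [htr0, hcdef, Complex.ofReal_re]
  have hqx : star u ⬝ᵥ (ρ x *ᵥ u) = ((C / η x : ℝ) : ℂ) := by
    have h := huA
    rw [hAdef, smul_mulVec, dotProduct_smul, smul_eq_mul] at h
    rw [Complex.ofReal_div]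
    rw [eq_div_iff (show ((η x : ℝ) : ℂ) ≠ 0 by exact_mod_cast (hη x).ne')]
    rw [← h]; ring
  have htrx : (ρ x * Mfun (some x)).trace = c * ((C / η x : ℝ) : ℂ) := by
    rw [hMx, hPdef, Matrix.mul_smul, trace_smul, hKdef, trace_mul_vecMulVec, hqx, smul_eq_mul]
  have htrxre : (ρ x * Mfun (some x)).trace.re = nrm.re⁻¹ * (C / η x) := by
    rw [htrx, hcdef, ← Complex.ofReal_mul, Complex.ofReal_re]
  refine ⟨C, ⟨⟨Mfun, hMpsd, hMsum, ?_, ?_⟩, ?_⟩, hCRA, fun q hq => hmin q hq⟩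
  · rw [htr0re]; positivity
  · rw [htr0re, htrxre]
    field_simp
    rw [div_self (hη x).ne']
  · rintro s ⟨M, hMp, hMs, hpos, hs⟩
    have hnn := trace_mul_psd_nonneg hCRA (hMp (some x))
    have hexp : (((C : ℂ) • ρ₀ - A) * M (some x)).trace
        = (C : ℂ) * (ρ₀ * M (some x)).trace - (η x : ℂ) * (ρ x * M (some x)).trace := by
      rw [sub_mul, trace_sub, smul_mul_assoc, trace_smul, smul_eq_mul, hAdef, smul_mul_assoc,
        trace_smul, smul_eq_mul]
    rw [hexp] at hnn
    have hre := (Complex.le_def.mp hnn).1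
    simp only [Complex.sub_re, Complex.zero_re, Complex.re_ofReal_mul] at hre
    rw [hs, div_le_iff₀ hpos]
    linarith
end

section
/- For an ensemble E with maximum confidence C_x and Π_x^⊥ the projection onto the kernel of C_x ρ₀ − η_x ρ_x, the dual cone M_x*(E) = {E Hermitian : Tr(EF) ≥ 0 for all F ∈ M_x(E)} equals {E Hermitian : Π_x^⊥ E Π_x^⊥ ⪰ 0}, where M_x(E) = {F ⪰ 0 : Tr[(C_x ρ₀ − η_x ρ_x) F] = 0}. -/
open Matrix BigOperators
open scoped ComplexOrder
open scoped MatrixOrder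

private lemma psd_eq_zero_of_trace {d : ℕ} {A : Matrix (Fin d) (Fin d) ℂ}
    (hA : A.PosSemidef) (h : A.trace = 0) : A = 0 := by
  obtain ⟨B, rfl⟩ : ∃ B : Matrix (Fin d) (Fin d) ℂ, A = Bᴴ * B :=
    ⟨CFC.sqrt A, by rw [(CFC.sqrt_nonneg A).posSemidef.1.eq, CFC.sqrt_mul_sqrt_self A hA.nonneg]⟩
  have h2 : ∑ j, ∑ i, (Complex.normSq (B i j) : ℂ) = 0 := by
    rw [← h]
    simp [Matrix.trace, Matrix.diag, Matrix.mul_apply, Matrix.conjTranspose_apply,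
      Complex.normSq_eq_conj_mul_self]
  have h3 : ∑ j, ∑ i, Complex.normSq (B i j) = 0 := by exact_mod_cast h2
  have h4 := (Finset.sum_eq_zero_iff_of_nonneg
    (fun j _ => Finset.sum_nonneg (fun i _ => Complex.normSq_nonneg (B i j)))).mp h3
  have hB : B = 0 := by
    ext i j
    have := (Finset.sum_eq_zero_iff_of_nonneg
      (fun i _ => Complex.normSq_nonneg (B i j))).mp (h4 j (Finset.mem_univ j)) i
      (Finset.mem_univ i)
    simpa using Complex.normSq_eq_zero.mp this
  simp [hB]

private lemma psd_trace_nonneg {d : ℕ} {A : Matrix (Fin d) (Fin d) ℂ}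
    (hA : A.PosSemidef) : 0 ≤ A.trace := by
  rw [Matrix.trace]
  apply Finset.sum_nonneg
  intro i _
  have := hA.dotProduct_mulVec_nonneg (Pi.single i 1)
  simpa [Matrix.mulVec_single, dotProduct, Pi.single_apply] using this

private lemma psd_trace_mul_nonneg {d : ℕ} {A B : Matrix (Fin d) (Fin d) ℂ}
    (hA : A.PosSemidef) (hB : B.PosSemidef) : 0 ≤ (A * B).trace := by
  have hS := (CFC.sqrt_nonneg B).posSemidef
  have htr : (A * B).trace = (CFC.sqrt B * A * CFC.sqrt B).trace := by
    conv_lhs => rw [← CFC.sqrt_mul_sqrt_self B hB.nonneg]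
    rw [← Matrix.mul_assoc, Matrix.trace_mul_comm (A * CFC.sqrt B) (CFC.sqrt B), Matrix.mul_assoc,
      ← Matrix.mul_assoc]
  rw [htr]
  have := hA.mul_mul_conjTranspose_same (CFC.sqrt B)
  rw [hS.1.eq] at this
  exact psd_trace_nonneg this

private lemma psd_mul_eq_zero_of_trace {d : ℕ} {A B : Matrix (Fin d) (Fin d) ℂ}
    (hA : A.PosSemidef) (hB : B.PosSemidef) (h : (A * B).trace = 0) : A * B = 0 := by
  have hS := (CFC.sqrt_nonneg B).posSemidef
  have hR := (CFC.sqrt_nonneg A).posSemidef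
  have htr : (CFC.sqrt B * A * CFC.sqrt B).trace = 0 := by
    rw [← h]
    conv_rhs => rw [← CFC.sqrt_mul_sqrt_self B hB.nonneg]
    rw [← Matrix.mul_assoc, Matrix.trace_mul_comm (A * CFC.sqrt B) (CFC.sqrt B), Matrix.mul_assoc,
      ← Matrix.mul_assoc]
  have hpsd : (CFC.sqrt B * A * CFC.sqrt B).PosSemidef := by
    have := hA.mul_mul_conjTranspose_same (CFC.sqrt B)
    rwa [hS.1.eq] at this
  have hzero : CFC.sqrt B * A * CFC.sqrt B = 0 := psd_eq_zero_of_trace hpsd htr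
  have hRS : CFC.sqrt A * CFC.sqrt B = 0 := by
    rw [← Matrix.conjTranspose_mul_self_eq_zero (A := CFC.sqrt A * CFC.sqrt B)]
    rw [Matrix.conjTranspose_mul, hR.1.eq, hS.1.eq]
    calc CFC.sqrt B * CFC.sqrt A * (CFC.sqrt A * CFC.sqrt B)
        = CFC.sqrt B * (CFC.sqrt A * CFC.sqrt A) * CFC.sqrt B := by
          simp only [Matrix.mul_assoc]
      _ = CFC.sqrt B * A * CFC.sqrt B := by rw [CFC.sqrt_mul_sqrt_self A hA.nonneg]
      _ = 0 := hzero
  calc A * B = (CFC.sqrt A * CFC.sqrt A) * (CFC.sqrt B * CFC.sqrt B) := by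
        rw [CFC.sqrt_mul_sqrt_self A hA.nonneg, CFC.sqrt_mul_sqrt_self B hB.nonneg]
    _ = CFC.sqrt A * (CFC.sqrt A * CFC.sqrt B) * CFC.sqrt B := by simp only [Matrix.mul_assoc]
    _ = 0 := by rw [hRS]; simp

/-- the dual cone M_x*(E) of M_x(E) = {F ⪰ 0 : Tr[(C_x ρ₀ − η_x ρ_x) F] = 0}
equals {E Hermitian : Π_x^⊥ E Π_x^⊥ ⪰ 0}, with Π_x^⊥ the kernel projection of
C_x ρ₀ − η_x ρ_x. -/
theorem stmt_4 {d n : ℕ} (hd : 0 < d) (hn : 0 < n)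
    (η : Fin n → ℝ) (ρ : Fin n → Matrix (Fin d) (Fin d) ℂ)
    (hη : ∀ i, 0 < η i) (hηsum : ∑ i, η i = 1)
    (hρ : ∀ i, (ρ i).PosSemidef) (hρtr : ∀ i, (ρ i).trace = 1)
    (ρ₀ : Matrix (Fin d) (Fin d) ℂ) (hρ₀ : ρ₀ = ∑ i, (η i : ℂ) • ρ i) (x : Fin n) (Cx : ℝ)
    (hCx : IsLeast { q : ℝ | ((q : ℂ) • ρ₀ - (η x : ℂ) • ρ x).PosSemidef } Cx)
    (Prp : Matrix (Fin d) (Fin d) ℂ)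
    (hPrherm : Prp.IsHermitian) (hPridem : Prp * Prp = Prp)
    (hPrrange : LinearMap.range Prp.mulVecLin =
      LinearMap.ker ((Cx : ℂ) • ρ₀ - (η x : ℂ) • ρ x).mulVecLin) :
    { E : Matrix (Fin d) (Fin d) ℂ | E.IsHermitian ∧
        ∀ F : Matrix (Fin d) (Fin d) ℂ, F.PosSemidef →
          (((Cx : ℂ) • ρ₀ - (η x : ℂ) • ρ x) * F).trace = 0 →
          0 ≤ (E * F).trace.re } =
    { E : Matrix (Fin d) (Fin d) ℂ | E.IsHermitian ∧ (Prp * E * Prp).PosSemidef } := by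
  set A : Matrix (Fin d) (Fin d) ℂ := (Cx : ℂ) • ρ₀ - (η x : ℂ) • ρ x with hAdef
  have hApsd : A.PosSemidef := hCx.1
  ext E
  simp only [Set.mem_setOf_eq]
  constructor
  · rintro ⟨hE, hdual⟩
    have hherm : (Prp * E * Prp).IsHermitian := by
      unfold Matrix.IsHermitian
      rw [Matrix.conjTranspose_mul, Matrix.conjTranspose_mul, hE.eq, hPrherm.eq,
        Matrix.mul_assoc]
    refine ⟨hE, Matrix.PosSemidef.of_dotProduct_mulVec_nonneg hherm ?_⟩
    intro v
    set u : Fin d → ℂ := Prp *ᵥ v with hu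
    have hAu : A *ᵥ u = 0 := by
      have hmem : u ∈ LinearMap.range Prp.mulVecLin := ⟨v, rfl⟩
      rw [hPrrange] at hmem
      simpa [Matrix.mulVecLin_apply] using hmem
    set F : Matrix (Fin d) (Fin d) ℂ := replicateCol (Fin 1) u * (replicateCol (Fin 1) u)ᴴ with hF
    have hFpsd : F.PosSemidef := Matrix.posSemidef_self_mul_conjTranspose _
    have key : ∀ M : Matrix (Fin d) (Fin d) ℂ, (M * F).trace = star u ⬝ᵥ M *ᵥ u := by
      intro M
      rw [hF]
      simp only [Matrix.trace, Matrix.diag, Matrix.mul_apply, Matrix.replicateCol_apply,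
        Matrix.conjTranspose_apply, dotProduct, Matrix.mulVec, Pi.star_apply,
        Fin.sum_univ_one]
      apply Finset.sum_congr rfl
      intro i _
      rw [Finset.mul_sum]
      apply Finset.sum_congr rfl
      intro j _
      ring
    have htr0 : (A * F).trace = 0 := by rw [key, hAu]; simp
    have h0 := hdual F hFpsd htr0
    rw [key] at h0
    have hquad : star v ⬝ᵥ (Prp * E * Prp) *ᵥ v = star u ⬝ᵥ E *ᵥ u := by
      rw [hu]
      rw [← Matrix.mulVec_mulVec, ← Matrix.mulVec_mulVec, Matrix.dotProduct_mulVec,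
        Matrix.star_mulVec, hPrherm.eq]
    rw [hquad]
    have hentry : ∀ i j, (starRingEnd ℂ) (E i j) = E j i := by
      intro i j
      simpa [Matrix.conjTranspose_apply, RCLike.star_def] using congrFun (congrFun hE.eq j) i
    have hst : (starRingEnd ℂ) (star u ⬝ᵥ E *ᵥ u) = star u ⬝ᵥ E *ᵥ u := by
      simp only [dotProduct, Matrix.mulVec, map_sum, Finset.mul_sum,
        Pi.star_apply, RCLike.star_def]
      rw [Finset.sum_comm]
      refine Finset.sum_congr rfl fun i _ => Finset.sum_congr rfl fun j _ => ?_
      rw [_root_.map_mul, _root_.map_mul, Complex.conj_conj, hentry]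
      ring
    have him : (star u ⬝ᵥ E *ᵥ u).im = 0 := Complex.conj_eq_iff_im.mp hst
    rw [Complex.le_def]
    exact ⟨by simpa using h0, by simpa using him.symm⟩
  · rintro ⟨hE, hpsd⟩
    refine ⟨hE, ?_⟩
    intro F hFpsd htr
    have hAF : A * F = 0 := psd_mul_eq_zero_of_trace hApsd hFpsd htr
    have hPF : Prp * F = F := by
      have hcol : ∀ w, (Prp * F) *ᵥ w = F *ᵥ w := by
        intro w
        have hmem : F *ᵥ w ∈ LinearMap.ker A.mulVecLin := by
          rw [LinearMap.mem_ker, Matrix.mulVecLin_apply, Matrix.mulVec_mulVec, hAF]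
          simp
        rw [← hPrrange] at hmem
        obtain ⟨y, hy⟩ := hmem
        rw [Matrix.mulVecLin_apply] at hy
        rw [← Matrix.mulVec_mulVec, ← hy, Matrix.mulVec_mulVec, hPridem, hy]
      ext i j
      have := congrFun (hcol (Pi.single j 1)) i
      simpa [Matrix.mulVec_single] using this
    have hFP : F * Prp = F := by
      have h := congrArg Matrix.conjTranspose hPF
      rw [Matrix.conjTranspose_mul, hPrherm.eq, hFpsd.1.eq] at h
      exact h
    have hF2 : F = Prp * (F * Prp) := by rw [hFP, hPF]
    have htreq : (E * F).trace = ((Prp * E * Prp) * F).trace := by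
      calc (E * F).trace = (E * (Prp * (F * Prp))).trace := by rw [← hF2]
        _ = ((E * Prp) * (F * Prp)).trace := by rw [Matrix.mul_assoc]
        _ = ((F * Prp) * (E * Prp)).trace := Matrix.trace_mul_comm _ _
        _ = (F * (Prp * E * Prp)).trace := by simp only [Matrix.mul_assoc]
        _ = ((Prp * E * Prp) * F).trace := Matrix.trace_mul_comm _ _
    rw [htreq]
    have := psd_trace_mul_nonneg hpsd hFpsd
    exact (Complex.le_def.mp this).1
end

section
/- If q_l ρ₀^l − η_l ρ_l ⪰ 0 for each l = 1,…,L (with all operators positive semidefinite, ρ₀^l and ρ_l states, q_l ≥ 0, η_l > 0), then (∏_l q_l)(⊗_l ρ₀^l) − (∏_l η_l)(⊗_l ρ_l) ⪰ 0. -/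
open Matrix BigOperators
open scoped ComplexOrder

/-- L-fold tensor (Kronecker) product of square complex matrices, realized on the
index type ∀ l, Fin (d l). -/
def tens {L : ℕ} {d : Fin L → ℕ}
    (X : ∀ l, Matrix (Fin (d l)) (Fin (d l)) ℂ) :
    Matrix (∀ l, Fin (d l)) (∀ l, Fin (d l)) ℂ :=
  Matrix.of fun a b => ∏ l, X l (a l) (b l)

lemma tens_mul {L : ℕ} {d : Fin L → ℕ}
    (X Y : ∀ l, Matrix (Fin (d l)) (Fin (d l)) ℂ) :
    tens (fun l => X l * Y l) = tens X * tens Y := by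
  ext a b
  simp only [tens, Matrix.of_apply, Matrix.mul_apply]
  rw [Finset.prod_univ_sum]
  rw [Fintype.piFinset_univ]
  exact Finset.sum_congr rfl fun c _ => Finset.prod_mul_distrib

lemma tens_conjTranspose {L : ℕ} {d : Fin L → ℕ}
    (X : ∀ l, Matrix (Fin (d l)) (Fin (d l)) ℂ) :
    tens (fun l => (X l)ᴴ) = (tens X)ᴴ := by
  ext a b
  simp [tens, Matrix.conjTranspose_apply]

lemma tens_posSemidef {L : ℕ} {d : Fin L → ℕ}
    {X : ∀ l, Matrix (Fin (d l)) (Fin (d l)) ℂ}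
    (hX : ∀ l, (X l).PosSemidef) : (tens X).PosSemidef := by
  have h : ∀ l, ∃ B, X l = Bᴴ * B := fun l =>
    by open scoped MatrixOrder in exact CStarAlgebra.nonneg_iff_eq_star_mul_self.mp (hX l).nonneg
  choose B hB using h
  have hx : X = fun l => (B l)ᴴ * B l := funext hB
  rw [hx, tens_mul, tens_conjTranspose]
  exact Matrix.posSemidef_conjTranspose_mul_self _

lemma posSemidef_sum {n : Type*} [Fintype n] {ι : Type*} (s : Finset ι)
    (f : ι → Matrix n n ℂ) (h : ∀ i ∈ s, (f i).PosSemidef) :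
    (∑ i ∈ s, f i).PosSemidef := by
  classical
  induction s using Finset.induction with
  | empty => simpa using Matrix.PosSemidef.zero
  | insert _ _ hnot ih =>
    rw [Finset.sum_insert hnot]
    exact (h _ (Finset.mem_insert_self _ _)).add
      (ih fun i hi => h i (Finset.mem_insert_of_mem hi))

lemma posSemidef_real_smul {n : Type*} [Fintype n] {A : Matrix n n ℂ}
    (hA : A.PosSemidef) {c : ℝ} (hc : 0 ≤ c) : ((c : ℂ) • A).PosSemidef := by
  constructor
  · unfold Matrix.IsHermitian
    rw [Matrix.conjTranspose_smul, hA.1.eq]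
    congr 1
    simp
  · intro x
    have hc' : (0 : ℂ) ≤ (c : ℂ) := by exact_mod_cast hc
    exact (hA.smul hc').2 x

/-- if q_l ρ₀^l − η_l ρ_l ⪰ 0 for each l, then
(∏ q_l) ⊗_l ρ₀^l − (∏ η_l) ⊗_l ρ_l ⪰ 0. -/
theorem stmt_13 {L : ℕ} (hL : 0 < L) {d : Fin L → ℕ} (hd : ∀ l, 0 < d l)
    (ρ₀ ρ : ∀ l, Matrix (Fin (d l)) (Fin (d l)) ℂ)
    (hρ₀ : ∀ l, (ρ₀ l).PosSemidef) (hρ₀tr : ∀ l, (ρ₀ l).trace = 1)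
    (hρ : ∀ l, (ρ l).PosSemidef) (hρtr : ∀ l, (ρ l).trace = 1)
    (q η : Fin L → ℝ) (hq : ∀ l, 0 ≤ q l) (hη : ∀ l, 0 < η l)
    (hpos : ∀ l, ((q l : ℂ) • ρ₀ l - (η l : ℂ) • ρ l).PosSemidef) :
    (((∏ l, q l : ℝ) : ℂ) • tens ρ₀ - ((∏ l, η l : ℝ) : ℂ) • tens ρ).PosSemidef := by
  classical
  -- A l = q l • ρ₀ l, B l = η l • ρ l, D l = A l - B l (all PSD)
  set A : ∀ l, Matrix (Fin (d l)) (Fin (d l)) ℂ := fun l => (q l : ℂ) • ρ₀ l with hA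
  set B : ∀ l, Matrix (Fin (d l)) (Fin (d l)) ℂ := fun l => (η l : ℂ) • ρ l with hB
  set D : ∀ l, Matrix (Fin (d l)) (Fin (d l)) ℂ := fun l => A l - B l with hD
  have hBpsd : ∀ l, (B l).PosSemidef := fun l =>
    posSemidef_real_smul (hρ l) (hη l).le
  have hDpsd : ∀ l, (D l).PosSemidef := fun l => hpos l
  -- scalar pullout
  have hscA : ((∏ l, q l : ℝ) : ℂ) • tens ρ₀ = tens A := by
    ext a b
    simp only [tens, Matrix.smul_apply, Matrix.of_apply, hA, smul_eq_mul]
    push_cast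
    rw [← Finset.prod_mul_distrib]
  have hscB : ((∏ l, η l : ℝ) : ℂ) • tens ρ = tens B := by
    ext a b
    simp only [tens, Matrix.smul_apply, Matrix.of_apply, hB, smul_eq_mul]
    push_cast
    rw [← Finset.prod_mul_distrib]
  rw [hscA, hscB]
  -- multilinear expansion: tens A = ∑ over subsets of mixed tensors
  have key : tens A = ∑ t ∈ (Finset.univ : Finset (Fin L)).powerset,
      tens (fun l => if l ∈ t then D l else B l) := by
    ext a b
    simp only [tens, Matrix.of_apply, Matrix.sum_apply]
    have : ∀ l, A l (a l) (b l) = D l (a l) (b l) + B l (a l) (b l) := by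
      intro l
      simp [hD]
    rw [Finset.prod_congr rfl fun l _ => this l, Finset.prod_add]
    refine Finset.sum_congr rfl fun t ht => ?_
    have hsub : t ⊆ Finset.univ := Finset.mem_powerset.mp ht
    have hsplit : (Finset.univ : Finset (Fin L)) = t ∪ (Finset.univ \ t) :=
      (Finset.union_sdiff_of_subset hsub).symm
    calc (∏ l ∈ t, D l (a l) (b l)) * ∏ l ∈ Finset.univ \ t, B l (a l) (b l)
        = (∏ l ∈ t, (if l ∈ t then D l (a l) (b l) else B l (a l) (b l))) *
          ∏ l ∈ Finset.univ \ t,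
            (if l ∈ t then D l (a l) (b l) else B l (a l) (b l)) := by
          congr 1
          · exact (Finset.prod_congr rfl fun l hl => by simp [hl]).symm
          · refine (Finset.prod_congr rfl fun l hl => ?_).symm
            simp [(Finset.mem_sdiff.mp hl).2]
      _ = ∏ l ∈ t ∪ (Finset.univ \ t),
            (if l ∈ t then D l (a l) (b l) else B l (a l) (b l)) :=
          (Finset.prod_union Finset.disjoint_sdiff).symm
      _ = ∏ l, (if l ∈ t then D l (a l) (b l) else B l (a l) (b l)) := by
          rw [Finset.union_sdiff_of_subset hsub]
      _ = ∏ l, (if l ∈ t then D l else B l) (a l) (b l) := by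
          refine Finset.prod_congr rfl fun l _ => ?_
          by_cases h : l ∈ t <;> simp [h]
  -- the empty-set term is tens B
  have hempty : tens (fun l => if l ∈ (∅ : Finset (Fin L)) then D l else B l)
      = tens B := by
    simp [tens]
  have hmem : (∅ : Finset (Fin L)) ∈ (Finset.univ : Finset (Fin L)).powerset := by
    simp
  rw [key, ← Finset.add_sum_erase _ _ hmem, hempty, add_sub_cancel_left]
  refine posSemidef_sum _ _ fun t _ => ?_
  refine tens_posSemidef fun l => ?_
  by_cases h : l ∈ t <;> simp [h, hDpsd l, hBpsd l]
end
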